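/- If every individual is eligible for the EWS category e, then the EWS-first sequential choice rule (open category first, e second, then the other VR categories) selects for categories o and e together exactly the min(|I|, q^o + q^e) highest merit-score applicants — i.e., it acts as if the q^e EWS positions were added to the open category. -/

import Mathlib

attribute [local instance] Classical.propDecidable

noncomputable section

variable {ι R : Type*} [Fintype ι] [DecidableEq ι] [Fintype R] [DecidableEq R]

/-- Eligibility sets: everyone is eligible for the open category (`none`),
and `elig c` is the set of members of VR-protected category `c`. -/
def eligOf (elig : R → Finset ι) : Option R → Finset ι
  | none => (Finset.univ : Finset ι)
  | some c => elig c

/-- Aggregate choice: all individuals chosen across all categories. -/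
def aggC (C : Finset ι → Option R → Finset ι) (I : Finset ι) : Finset ι :=
  Finset.univ.biUnion fun v => C I v

/-- `C` is a choice rule for capacities `q` and eligibility `elig`: each category chooses
eligible applicants up to capacity, and no individual is chosen by two categories. -/
def IsChoiceRule (q : Option R → ℕ) (elig : R → Finset ι)
    (C : Finset ι → Option R → Finset ι) : Prop :=
  ∀ I : Finset ι,
    (∀ v, C I v ⊆ I ∩ eligOf elig v) ∧
    (∀ v, (C I v).card ≤ q v) ∧
    (∀ v v', v ≠ v' → Disjoint (C I v) (C I v'))

/-- Non-wastefulness: no position remains idle while an eligible applicant is unchosen. -/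
def NonWasteful (q : Option R → ℕ) (elig : R → Finset ι)
    (C : Finset ι → Option R → Finset ι) : Prop :=
  ∀ (I : Finset ι) (v : Option R) (j : ι),
    j ∈ I → j ∉ aggC C I → (C I v).card < q v → j ∉ eligOf elig v

/-- No justified envy: a chosen individual outscores every eligible entirely-unchosen applicant. -/
def NoJustifiedEnvy (σ : ι → ℝ) (elig : R → Finset ι)
    (C : Finset ι → Option R → Finset ι) : Prop :=
  ∀ (I : Finset ι) (v : Option R) (i j : ι),
    i ∈ C I v → j ∈ I → j ∈ eligOf elig v → j ∉ aggC C I → σ j < σ i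

/-- Compliance with VR protections: a VR recipient implies the open category is full, with
every open-category recipient scoring strictly higher. -/
def CompliesVR (σ : ι → ℝ) (q : Option R → ℕ)
    (C : Finset ι → Option R → Finset ι) : Prop :=
  ∀ (I : Finset ι) (c : R) (i : ι), i ∈ C I (some c) →
    (C I none).card = q none ∧ ∀ j ∈ C I none, σ i < σ j

/-- The (at most) `k` highest merit-score members of `S`. -/
def topK (σ : ι → ℝ) (S : Finset ι) (k : ℕ) : Finset ι :=
  S.filter fun i => (S.filter fun j => σ i ≤ σ j).card ≤ k

/-- The Over-and-Above choice rule: open positions go to the top-merit applicants; then each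
VR category's quota is filled by the highest-merit remaining eligible members. -/
def OA (σ : ι → ℝ) (q : Option R → ℕ) (elig : R → Finset ι)
    (I : Finset ι) : Option R → Finset ι
  | none => topK σ I (q none)
  | some c => topK σ ((I \ topK σ I (q none)) ∩ elig c) (q (some c))

/-- The sequential choice rule: categories are processed in the order given by the list,
each filling its positions by serial dictatorship on the remaining eligible applicants. -/
def seqAssign (σ : ι → ℝ) (q : Option R → ℕ) (elig : R → Finset ι) :
    List (Option R) → Finset ι → Option R → Finset ι
  | [], _, _ => ∅
  | v :: rest, I, u =>
    let chosen := topK σ (I ∩ eligOf elig v) (q v)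
    if u = v then chosen else seqAssign σ q elig rest (I \ chosen) u

set_option linter.unusedSectionVars false


def rk (σ : ι → ℝ) (S : Finset ι) (i : ι) : ℕ := (S.filter fun j => σ i ≤ σ j).card

lemma rk_pos (σ : ι → ℝ) {S : Finset ι} {i : ι} (hi : i ∈ S) : 1 ≤ rk σ S i :=
  Finset.card_pos.mpr ⟨i, Finset.mem_filter.mpr ⟨hi, le_refl _⟩⟩

lemma rk_lt (σ : ι → ℝ) (S : Finset ι) {i j : ι} (hi : i ∈ S) (h : σ i < σ j) :
    rk σ S j < rk σ S i := by
  apply Finset.card_lt_card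
  constructor
  · intro x hx
    simp only [Finset.mem_filter] at hx ⊢
    exact ⟨hx.1, le_trans h.le hx.2⟩
  · intro hsub
    have := hsub (Finset.mem_filter.mpr ⟨hi, le_refl _⟩)
    simp only [Finset.mem_filter] at this
    exact absurd this.2 (not_le.mpr h)

lemma rk_injOn (σ : ι → ℝ) (hσ : Function.Injective σ) (S : Finset ι)
    {i j : ι} (hi : i ∈ S) (hj : j ∈ S) (h : rk σ S i = rk σ S j) : i = j := by
  rcases lt_trichotomy (σ i) (σ j) with hlt | heq | hlt
  · exact absurd h (rk_lt σ S hi hlt).ne'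
  · exact hσ heq
  · exact absurd h (rk_lt σ S hj hlt).ne

lemma card_topK_le (σ : ι → ℝ) (hσ : Function.Injective σ) (S : Finset ι) (k : ℕ) :
    (topK σ S k).card ≤ k := by
  have : (topK σ S k).card ≤ (Finset.Icc 1 k).card := by
    apply Finset.card_le_card_of_injOn (rk σ S)
    · intro x hx
      simp only [topK, Finset.mem_coe, Finset.mem_filter] at hx
      exact Finset.mem_Icc.mpr ⟨rk_pos σ hx.1, hx.2⟩
    · intro x hx y hy hxy
      simp only [topK, Finset.mem_coe, Finset.mem_filter] at hx hy
      exact rk_injOn σ hσ S hx.1 hy.1 hxy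
  simpa using this

lemma card_band_le (σ : ι → ℝ) (hσ : Function.Injective σ) (S : Finset ι) (a b : ℕ) :
    (S.filter fun j => a < rk σ S j ∧ rk σ S j ≤ a + b).card ≤ b := by
  have : (S.filter fun j => a < rk σ S j ∧ rk σ S j ≤ a + b).card ≤ (Finset.Ioc a (a+b)).card := by
    apply Finset.card_le_card_of_injOn (rk σ S)
    · intro x hx
      simp only [Finset.mem_coe, Finset.mem_filter] at hx
      exact Finset.mem_Ioc.mpr hx.2
    · intro x hx y hy hxy
      simp only [Finset.mem_coe, Finset.mem_filter] at hx hy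
      exact rk_injOn σ hσ S hx.1 hy.1 hxy
  simpa using this

lemma topK_union (σ : ι → ℝ) (hσ : Function.Injective σ) (I : Finset ι) (a b : ℕ) :
    topK σ I a ∪ topK σ (I \ topK σ I a) b = topK σ I (a + b) := by
  set A := topK σ I a with hA
  -- For i ∈ I \ A : A ⊆ filter (σ i ≤ σ ·) of I
  have hAsub : ∀ i ∈ I \ A, A ⊆ I.filter fun j => σ i ≤ σ j := by
    intro i hi j hj
    have hiI : i ∈ I := (Finset.mem_sdiff.mp hi).1
    have hiA : i ∉ A := (Finset.mem_sdiff.mp hi).2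
    have hjI : j ∈ I := Finset.mem_filter.mp hj |>.1
    have hja : rk σ I j ≤ a := (Finset.mem_filter.mp hj).2
    have hia : ¬ rk σ I i ≤ a := by
      intro h; exact hiA (Finset.mem_filter.mpr ⟨hiI, h⟩)
    refine Finset.mem_filter.mpr ⟨hjI, ?_⟩
    rcases lt_trichotomy (σ i) (σ j) with hlt | heq | hlt
    · exact hlt.le
    · exact heq.le
    · exact absurd (lt_of_le_of_lt hja (lt_of_not_ge hia)) (not_lt.mpr (rk_lt σ I hjI hlt).le)
  -- rank decomposition
  have hrk : ∀ i ∈ I \ A, rk σ I i = rk σ (I \ A) i + A.card := by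
    intro i hi
    have hsplit : I.filter (fun j => σ i ≤ σ j) = (I \ A).filter (fun j => σ i ≤ σ j) ∪ A := by
      ext x
      simp only [Finset.mem_union, Finset.mem_filter, Finset.mem_sdiff]
      constructor
      · rintro ⟨hxI, hle⟩
        by_cases hxA : x ∈ A
        · exact Or.inr hxA
        · exact Or.inl ⟨⟨hxI, hxA⟩, hle⟩
      · rintro (⟨⟨hxI, _⟩, hle⟩ | hxA)
        · exact ⟨hxI, hle⟩
        · have := hAsub i hi hxA
          exact Finset.mem_filter.mp this
    have hdisj : Disjoint ((I \ A).filter fun j => σ i ≤ σ j) A := by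
      refine Finset.disjoint_left.mpr ?_
      intro x hx hxA
      exact (Finset.mem_sdiff.mp (Finset.mem_filter.mp hx).1).2 hxA
    rw [rk, hsplit, Finset.card_union_of_disjoint hdisj]; rfl
  have hcardA : A.card ≤ a := card_topK_le σ hσ I a
  ext i
  simp only [Finset.mem_union]
  constructor
  · rintro (hi | hi)
    · have hiI := (Finset.mem_filter.mp hi).1
      have := (Finset.mem_filter.mp hi).2
      exact Finset.mem_filter.mpr ⟨hiI, le_trans this (Nat.le_add_right a b)⟩
    · have hiIA : i ∈ I \ A := (Finset.mem_filter.mp hi).1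
      have hb : rk σ (I \ A) i ≤ b := (Finset.mem_filter.mp hi).2
      refine Finset.mem_filter.mpr ⟨(Finset.mem_sdiff.mp hiIA).1, ?_⟩
      have := hrk i hiIA
      show rk σ I i ≤ a + b
      omega
  · intro hi
    have hiI := (Finset.mem_filter.mp hi).1
    have hab : rk σ I i ≤ a + b := (Finset.mem_filter.mp hi).2
    by_cases hiA : i ∈ A
    · exact Or.inl hiA
    · have hiIA : i ∈ I \ A := Finset.mem_sdiff.mpr ⟨hiI, hiA⟩
      refine Or.inr (Finset.mem_filter.mpr ⟨hiIA, ?_⟩)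
      -- need rk σ (I\A) i ≤ b, i.e. rk σ I i ≤ A.card + b
      have hkey : rk σ I i ≤ A.card + b := by
        -- filter(σ i ≤) ⊆ A ∪ band
        have hsub : I.filter (fun j => σ i ≤ σ j) ⊆
            A ∪ I.filter (fun j => a < rk σ I j ∧ rk σ I j ≤ a + b) := by
          intro x hx
          have hxI := (Finset.mem_filter.mp hx).1
          have hxle : σ i ≤ σ x := (Finset.mem_filter.mp hx).2
          by_cases hxA : x ∈ A
          · exact Finset.mem_union_left _ hxA
          · refine Finset.mem_union_right _ (Finset.mem_filter.mpr ⟨hxI, ?_, ?_⟩)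
            · by_contra h
              exact hxA (Finset.mem_filter.mpr ⟨hxI, not_lt.mp h⟩)
            · -- rk x ≤ rk i ≤ a + b ; since σ i ≤ σ x
              rcases eq_or_lt_of_le hxle with heq | hlt
              · rw [hσ heq] at hab; exact hab
              · exact le_trans (rk_lt σ I hiI hlt).le hab
        calc rk σ I i ≤ (A ∪ I.filter (fun j => a < rk σ I j ∧ rk σ I j ≤ a + b)).card :=
              Finset.card_le_card hsub
          _ ≤ A.card + (I.filter (fun j => a < rk σ I j ∧ rk σ I j ≤ a + b)).card :=
              Finset.card_union_le _ _
          _ ≤ A.card + b := by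
              have := card_band_le σ hσ I a b; omega
      have := hrk i hiIA
      show rk σ (I \ A) i ≤ b
      omega

/-- if everyone is eligible for the EWS category `e`, then the EWS-first
sequential rule (open first, `e` second) awards the open and EWS positions together to
exactly the `min(|I|, q^o + q^e)` highest-merit applicants. -/
theorem ewsFirst_universal_eligibility (σ : ι → ℝ) (hσ : Function.Injective σ)
    (q : Option R → ℕ) (elig : R → Finset ι) (e : R)
    (helig : elig e = (Finset.univ : Finset ι)) (rest : List (Option R)) :
    ∀ I : Finset ι,
      seqAssign σ q elig ((none : Option R) :: some e :: rest) I none ∪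
          seqAssign σ q elig ((none : Option R) :: some e :: rest) I (some e) =
        topK σ I (q none + q (some e)) := by
  intro I
  simp only [seqAssign, eligOf, helig, Finset.inter_univ, if_pos, reduceIte]
  exact topK_union σ hσ I (q none) (q (some e))
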